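/- Assume that the probability vectors (|v₊(e)|²)_{e∈{0,1,2}} and (|v₋(e)|²)_{e∈{0,1,2}} are distinct. Let n ≥ 1 and let η, η' : ℤ/nℤ → {+,−} have the same number of symbols +, and suppose η' is not a cyclic rotation of η (i.e. there is no j ∈ ℤ/nℤ with η'(·) = η(·+j)). Then the measures μ_η and μ_{η'} are mutually singular. -/

import Mathlib

open MeasureTheory
open scoped ENNReal

/-- The two-sided shift on `Σ = {0,1,2}^ℤ`. -/
def shiftMap (ε : ℤ → Fin 3) : ℤ → Fin 3 := fun n => ε (n + 1)

/-- `μ` is the product measure on `{0,1,2}^ℤ` with one-site weights `P n` at coordinate `n`. -/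
def IsProductMeasure (μ : Measure (ℤ → Fin 3)) (P : ℤ → Fin 3 → ℝ) : Prop :=
  ∀ (s : Finset ℤ) (g : ℤ → Fin 3),
    μ {ε | ∀ i ∈ s, ε i = g i} = ∏ i ∈ s, ENNReal.ofReal (P i (g i))

/-- The 3×3 discrete Fourier transform. -/
noncomputable def dft3 : Matrix (Fin 3) (Fin 3) ℂ := fun j k =>
  (((Real.sqrt 3)⁻¹ : ℝ) : ℂ) *
    Complex.exp (-2 * Real.pi * Complex.I * ((j : ℕ) : ℂ) * ((k : ℕ) : ℂ) / 3)

/-- The orthogonal projection of `ℂ³` onto `span(e₀,e₂)`. -/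
def pi02 : Matrix (Fin 3) (Fin 3) ℂ := fun i j => if i = j ∧ i ≠ 1 then 1 else 0

/-- The matrix `F̃₃* = F₃* ∘ π₀₂`. -/
noncomputable def F3tilde : Matrix (Fin 3) (Fin 3) ℂ := dft3.conjTranspose * pi02

/-- The weight `P(e) = |v(e)|²`. -/
noncomputable def Pweight (v : Fin 3 → ℂ) (e : Fin 3) : ℝ := ‖v e‖ ^ 2

/-- The weight `P*(e) = |(F₃v)(e)|²`. -/
noncomputable def PstarWeight (v : Fin 3 → ℂ) (e : Fin 3) : ℝ :=
  ‖dft3.mulVec v e‖ ^ 2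

/-- The fraction `t(η)` of symbols `+` in `η`. -/
noncomputable def tplus (n : ℕ) (hn : 0 < n) (η : ZMod n → Bool) : ℝ :=
  haveI : NeZero n := ⟨hn.ne'⟩
  ((Finset.univ.filter fun j => η j = true).card : ℝ) / n

/-- The decay rate `Λ_η = |λ₋|^{2(1-t(η))}·|λ₊|^{2t(η)}`. -/
noncomputable def LamEta (lp lm : ℂ) (n : ℕ) (hn : 0 < n) (η : ZMod n → Bool) : ℝ :=
  ‖lm‖ ^ (2 * (1 - tplus n hn η)) * ‖lp‖ ^ (2 * tplus n hn η)

/-- The coefficient `C_{η,j} = Π_{m<j} (|λ_{η(m)}|²/Λ_η)`. -/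
noncomputable def Cweight (lp lm : ℂ) (n : ℕ) (hn : 0 < n) (η : ZMod n → Bool)
    (j : ZMod n) : ℝ :=
  haveI : NeZero n := ⟨hn.ne'⟩
  ∏ m ∈ Finset.range j.val,
    (‖if η (m : ZMod n) then lp else lm‖ ^ 2 / LamEta lp lm n hn η)

/-- The family `μ̃_{η,j}`: each `μt j` is the product probability measure whose factor at
coordinate `m ∈ ℤ` is `P_{η(j+m)}` if `m ≥ 0` and `P*_{η(j+m)}` if `m < 0`. -/
def IsTildeFamily (vp vm : Fin 3 → ℂ) (n : ℕ) (hn : 0 < n) (η : ZMod n → Bool)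
    (μt : ZMod n → Measure (ℤ → Fin 3)) : Prop :=
  ∀ j : ZMod n, IsProbabilityMeasure (μt j) ∧
    IsProductMeasure (μt j) (fun m e =>
      if 0 ≤ m then Pweight (if η (j + (m : ZMod n)) then vp else vm) e
      else PstarWeight (if η (j + (m : ZMod n)) then vp else vm) e)

/-- The eigenmeasure `μ_η = 𝒩_η⁻¹ Σ_j C_{η,j} μ̃_{η,j}`. -/
noncomputable def muEta (lp lm : ℂ) (n : ℕ) (hn : 0 < n) (η : ZMod n → Bool)
    (μt : ZMod n → Measure (ℤ → Fin 3)) : Measure (ℤ → Fin 3) :=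
  haveI : NeZero n := ⟨hn.ne'⟩
  (ENNReal.ofReal (∑ j : ZMod n, Cweight lp lm n hn η j))⁻¹ •
    ∑ j : ZMod n, ENNReal.ofReal (Cweight lp lm n hn η j) • μt j

section Aux

open Filter ProbabilityTheory
open scoped Classical

variable {μ : Measure (ℤ → Fin 3)} {P : ℤ → Fin 3 → ℝ}

lemma prodMeas_single (hμ : IsProductMeasure μ P) (m : ℤ) (a : Fin 3) :
    μ {ε | ε m = a} = ENNReal.ofReal (P m a) := by
  have := hμ {m} (fun _ => a)
  simpa using this

lemma prodMeas_pair (hμ : IsProductMeasure μ P) {m1 m2 : ℤ} (h : m1 ≠ m2) (a b : Fin 3) :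
    μ {ε | ε m1 = a ∧ ε m2 = b}
      = ENNReal.ofReal (P m1 a) * ENNReal.ofReal (P m2 b) := by
  classical
  have hkey := hμ {m1, m2} (fun i => if i = m1 then a else b)
  rw [Finset.prod_pair h] at hkey
  have h2 : ¬ (m2 = m1) := fun hh => h hh.symm
  have hset : {ε : ℤ → Fin 3 | ∀ i ∈ ({m1, m2} : Finset ℤ), ε i = (if i = m1 then a else b)}
      = {ε : ℤ → Fin 3 | ε m1 = a ∧ ε m2 = b} := by
    ext ε
    simp [Finset.mem_insert, h2]
  rw [hset] at hkey
  simpa [h2] using hkey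

lemma meas_coord (m : ℤ) (a : Fin 3) :
    MeasurableSet {ε : ℤ → Fin 3 | ε m = a} := by
  have : {ε : ℤ → Fin 3 | ε m = a} = (fun ε : ℤ → Fin 3 => ε m) ⁻¹' {a} := rfl
  rw [this]
  exact (measurable_pi_apply m) (measurableSet_singleton a)

lemma prodMeas_eval (hμ : IsProductMeasure μ P) (m : ℤ) (C : Set (Fin 3)) :
    μ ((fun ε : ℤ → Fin 3 => ε m) ⁻¹' C)
      = ∑ a ∈ Finset.univ.filter (· ∈ C), ENNReal.ofReal (P m a) := by
  classical
  have hdec : ((fun ε : ℤ → Fin 3 => ε m) ⁻¹' C)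
      = ⋃ a ∈ Finset.univ.filter (· ∈ C), {ε : ℤ → Fin 3 | ε m = a} := by
    ext ε; simp
  rw [hdec, measure_biUnion_finset ?_ (fun a _ => meas_coord m a)]
  · exact Finset.sum_congr rfl fun a _ => prodMeas_single hμ m a
  · intro a _ b _ hab
    exact Set.disjoint_left.mpr fun ε hε hε' => hab (hε ▸ hε')

lemma prodMeas_eval_pair (hμ : IsProductMeasure μ P) {m1 m2 : ℤ} (h : m1 ≠ m2)
    (A B : Set (Fin 3)) :
    μ ((fun ε : ℤ → Fin 3 => ε m1) ⁻¹' A ∩ (fun ε : ℤ → Fin 3 => ε m2) ⁻¹' B)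
      = (∑ a ∈ Finset.univ.filter (· ∈ A), ENNReal.ofReal (P m1 a))
        * (∑ b ∈ Finset.univ.filter (· ∈ B), ENNReal.ofReal (P m2 b)) := by
  classical
  rw [Finset.sum_mul_sum]
  have hdec : ((fun ε : ℤ → Fin 3 => ε m1) ⁻¹' A ∩ (fun ε : ℤ → Fin 3 => ε m2) ⁻¹' B)
      = ⋃ p ∈ (Finset.univ.filter (· ∈ A)) ×ˢ (Finset.univ.filter (· ∈ B)),
          {ε : ℤ → Fin 3 | ε m1 = p.1 ∧ ε m2 = p.2} := by
    ext ε; simp [Finset.mem_product]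
  rw [hdec, measure_biUnion_finset ?_ ?_]
  · rw [Finset.sum_product]
    exact Finset.sum_congr rfl fun a _ => Finset.sum_congr rfl fun b _ => prodMeas_pair hμ h a b
  · intro p _ q _ hpq
    refine Set.disjoint_left.mpr fun ε hε hε' => hpq ?_
    exact Prod.ext (hε.1 ▸ hε'.1) (hε.2 ▸ hε'.2)
  · intro p _
    exact (meas_coord m1 p.1).inter (meas_coord m2 p.2)

lemma prodMeas_indep_eval (hμ : IsProductMeasure μ P) {m1 m2 : ℤ} (h : m1 ≠ m2) :
    IndepFun (fun ε : ℤ → Fin 3 => ε m1) (fun ε : ℤ → Fin 3 => ε m2) μ := by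
  rw [indepFun_iff_measure_inter_preimage_eq_mul]
  intro A B _ _
  rw [prodMeas_eval hμ m1 A, prodMeas_eval hμ m2 B, prodMeas_eval_pair hμ h A B]

end Aux

section Aux2

open Filter ProbabilityTheory
open scoped Classical

variable {μ : Measure (ℤ → Fin 3)} {P : ℤ → Fin 3 → ℝ}

lemma prodMeas_slln (hμ : IsProductMeasure μ P) [IsProbabilityMeasure μ]
    (pos : ℕ → ℤ) (hinj : Function.Injective pos) (e : Fin 3) (p : ℝ)
    (hp : ∀ k, P (pos k) e = p) (hp0 : 0 ≤ p) :
    ∀ᵐ ε ∂μ, Filter.Tendsto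
      (fun N : ℕ => (∑ k ∈ Finset.range N, (if ε (pos k) = e then (1:ℝ) else 0)) / N)
      Filter.atTop (nhds p) := by
  set X : ℕ → (ℤ → Fin 3) → ℝ := fun k ε => if ε (pos k) = e then 1 else 0 with hX
  have hXind : ∀ k, X k = fun ε =>
      Set.indicator {ε : ℤ → Fin 3 | ε (pos k) = e} (fun _ => (1:ℝ)) ε := by
    intro k; funext ε; simp [Set.indicator_apply, X]
  have hmeasset : ∀ k, MeasurableSet {ε : ℤ → Fin 3 | ε (pos k) = e} :=
    fun k => meas_coord (pos k) e
  have hXmeas : ∀ k, Measurable (X k) := by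
    intro k; rw [hXind k]; exact measurable_const.indicator (hmeasset k)
  have hsingle : ∀ k, μ {ε : ℤ → Fin 3 | ε (pos k) = e} = ENNReal.ofReal p := by
    intro k
    have := prodMeas_single hμ (pos k) e
    rwa [hp k] at this
  have hint : Integrable (X 0) μ := by
    rw [hXind 0]
    exact (integrable_const (1:ℝ)).indicator (hmeasset 0)
  have hphi : Measurable (fun x : Fin 3 => if x = e then (1:ℝ) else 0) :=
    Measurable.of_discrete
  have hindep : Pairwise (Function.onFun (IndepFun · · μ) X) := by
    intro i j hij
    have h1 : pos i ≠ pos j := fun hh => hij (hinj hh)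
    exact (prodMeas_indep_eval hμ h1).comp hphi hphi
  have hmap : ∀ k (s : Set ℝ), MeasurableSet s → μ (X k ⁻¹' s)
      = ((if (1:ℝ) ∈ s then ENNReal.ofReal p else 0)
        + (if (0:ℝ) ∈ s then 1 - ENNReal.ofReal p else 0)) := by
    intro k s _
    have hpre : X k ⁻¹' s = (fun ε : ℤ → Fin 3 => ε (pos k)) ⁻¹'
        ((fun x : Fin 3 => if x = e then (1:ℝ) else 0) ⁻¹' s) := rfl
    by_cases h1 : (1:ℝ) ∈ s <;> by_cases h0 : (0:ℝ) ∈ s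
    · have hC : ((fun x : Fin 3 => if x = e then (1:ℝ) else 0) ⁻¹' s) = Set.univ := by
        ext x; by_cases hx : x = e <;> simp [hx, h1, h0]
      have hle : ENNReal.ofReal p ≤ 1 := by
        rw [← hsingle k]; exact prob_le_one
      rw [hpre, hC]
      simp only [h1, h0, if_true]
      rw [add_tsub_cancel_of_le hle, Set.preimage_univ, measure_univ]
    · have hC : ((fun x : Fin 3 => if x = e then (1:ℝ) else 0) ⁻¹' s) = {e} := by
        ext x; by_cases hx : x = e <;> simp [hx, h1, h0]
      rw [hpre, hC]
      simp only [h1, h0, if_true, if_false, add_zero]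
      exact hsingle k
    · have hC : ((fun x : Fin 3 => if x = e then (1:ℝ) else 0) ⁻¹' s) = ({e} : Set (Fin 3))ᶜ := by
        ext x; by_cases hx : x = e <;> simp [hx, h1, h0]
      rw [hpre, hC, Set.preimage_compl]
      simp only [h1, h0, if_true, if_false, zero_add]
      rw [measure_compl (by exact hmeasset k) (measure_ne_top _ _)]
      rw [show ((fun ε : ℤ → Fin 3 => ε (pos k)) ⁻¹' {e}) = {ε : ℤ → Fin 3 | ε (pos k) = e} from rfl,
        hsingle k, measure_univ]
    · have hC : ((fun x : Fin 3 => if x = e then (1:ℝ) else 0) ⁻¹' s) = (∅ : Set (Fin 3)) := by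
        ext x; by_cases hx : x = e <;> simp [hx, h1, h0]
      rw [hpre, hC]
      simp [h1, h0]
  have hident : ∀ i, IdentDistrib (X i) (X 0) μ μ := by
    intro i
    refine ⟨(hXmeas i).aemeasurable, (hXmeas 0).aemeasurable, ?_⟩
    ext s hs
    rw [Measure.map_apply (hXmeas i) hs, Measure.map_apply (hXmeas 0) hs,
      hmap i s hs, hmap 0 s hs]
  have hexp : μ[X 0] = p := by
    rw [hXind 0]
    rw [show (fun ε => Set.indicator {ε : ℤ → Fin 3 | ε (pos 0) = e} (fun _ => (1:ℝ)) ε)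
        = Set.indicator {ε : ℤ → Fin 3 | ε (pos 0) = e} (1 : (ℤ → Fin 3) → ℝ) from rfl]
    rw [integral_indicator_one (hmeasset 0), Measure.real, hsingle 0, ENNReal.toReal_ofReal hp0]
  have := strong_law_ae_real X hint hindep hident
  rw [hexp] at this
  exact this

end Aux2

section Aux3

open Filter ProbabilityTheory

/-- The set of configurations whose empirical frequency of symbol `e` along the positions
`pos k` converges to `c`. -/
def avgSet (pos : ℕ → ℤ) (e : Fin 3) (c : ℝ) : Set (ℤ → Fin 3) :=
  {ε | Filter.Tendsto
    (fun N : ℕ => (∑ k ∈ Finset.range N, (if ε (pos k) = e then (1:ℝ) else 0)) / N)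
    Filter.atTop (nhds c)}

lemma measurableSet_avgSet (pos : ℕ → ℤ) (e : Fin 3) (c : ℝ) :
    MeasurableSet (avgSet pos e c) := by
  apply measurableSet_tendsto
  intro N
  apply Measurable.div_const
  apply Finset.measurable_sum
  intro k _
  exact Measurable.ite (meas_coord (pos k) e) measurable_const measurable_const

lemma prodMeas_avgSet_compl {μ : Measure (ℤ → Fin 3)} {P : ℤ → Fin 3 → ℝ}
    (hμ : IsProductMeasure μ P) [IsProbabilityMeasure μ]
    (pos : ℕ → ℤ) (hinj : Function.Injective pos) (e : Fin 3) (p : ℝ)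
    (hp : ∀ k, P (pos k) e = p) (hp0 : 0 ≤ p) :
    μ (avgSet pos e p)ᶜ = 0 := by
  have h := prodMeas_slln hμ pos hinj e p hp hp0
  rw [MeasureTheory.ae_iff] at h
  exact h

end Aux3

/-- If the probability vectors `(|v₊(e)|²)` and `(|v₋(e)|²)` are
distinct, and `η, η'` have the same number of `+` symbols but are not cyclic rotations of
one another, then `μ_η` and `μ_{η'}` are mutually singular. -/
theorem muEta_mutuallySingular
    (lp lm : ℂ) (hlp : lp ≠ 0) (hlm : lm ≠ 0) (vp vm : Fin 3 → ℂ)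
    (hvp : F3tilde.mulVec vp = lp • vp) (hvm : F3tilde.mulVec vm = lm • vm)
    (hvpu : ∑ e, ‖vp e‖ ^ 2 = 1) (hvmu : ∑ e, ‖vm e‖ ^ 2 = 1)
    (hdiff : (fun e => ‖vp e‖ ^ 2) ≠ fun e => ‖vm e‖ ^ 2)
    (n : ℕ) (hn : 0 < n) (η η' : ZMod n → Bool)
    (hsame : haveI : NeZero n := ⟨hn.ne'⟩
      (Finset.univ.filter fun j => η j = true).card
        = (Finset.univ.filter fun j => η' j = true).card)
    (hnotcyc : ¬ ∃ j : ZMod n, ∀ i : ZMod n, η' i = η (i + j))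
    (μt μt' : ZMod n → Measure (ℤ → Fin 3))
    (hfam : IsTildeFamily vp vm n hn η μt) (hfam' : IsTildeFamily vp vm n hn η' μt') :
    (muEta lp lm n hn η μt).MutuallySingular (muEta lp lm n hn η' μt') := by
  classical
  haveI : NeZero n := ⟨hn.ne'⟩
  have hprob : ∀ j, IsProbabilityMeasure (μt j) := fun j => (hfam j).1
  have hprob' : ∀ j, IsProbabilityMeasure (μt' j) := fun j => (hfam' j).1
  -- positions along the arithmetic progression `r + k n`
  set pos : ℕ → ℕ → ℤ := fun r k => (r : ℤ) + k * n with hpos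
  have hposinj : ∀ r, Function.Injective (pos r) := by
    intro r k1 k2 h
    simp only [pos] at h
    have : (k1 : ℤ) * n = k2 * n := by omega
    have hne : (n : ℤ) ≠ 0 := by exact_mod_cast hn.ne'
    exact_mod_cast mul_right_cancel₀ hne this
  have hcast : ∀ r k : ℕ, ((pos r k : ℤ) : ZMod n) = (r : ZMod n) := by
    intro r k
    simp only [pos]
    push_cast
    simp [ZMod.natCast_self]
  have hposnn : ∀ r k : ℕ, 0 ≤ pos r k := by
    intro r k; simp only [pos]; positivity
  -- a.e. convergence of empirical frequencies for each tilde measure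
  have K1 : ∀ (θ : ZMod n → Bool) (μs : ZMod n → Measure (ℤ → Fin 3)),
      IsTildeFamily vp vm n hn θ μs → ∀ (j : ZMod n) (r : ℕ) (e : Fin 3),
      μs j (avgSet (pos r) e (Pweight (if θ (j + (r : ZMod n)) then vp else vm) e))ᶜ = 0 := by
    intro θ μs hf j r e
    haveI := (hf j).1
    refine prodMeas_avgSet_compl (hf j).2 (pos r) (hposinj r) e _ (fun k => ?_) ?_
    · simp only [if_pos (hposnn r k), hcast r k]
    · exact sq_nonneg _
  -- the typical sets
  set T : (ZMod n → Bool) → ZMod n → Set (ℤ → Fin 3) := fun θ j =>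
    ⋂ (r : Fin n) (e : Fin 3),
      avgSet (pos r.val) e (Pweight (if θ (j + (r.val : ZMod n)) then vp else vm) e) with hT
  have hTmeas : ∀ θ j, MeasurableSet (T θ j) := fun θ j =>
    MeasurableSet.iInter fun r => MeasurableSet.iInter fun e => measurableSet_avgSet _ _ _
  have hTfull : ∀ (θ : ZMod n → Bool) (μs : ZMod n → Measure (ℤ → Fin 3)),
      IsTildeFamily vp vm n hn θ μs → ∀ j, μs j (T θ j)ᶜ = 0 := by
    intro θ μs hf j
    rw [hT]
    simp only [Set.compl_iInter]
    refine measure_iUnion_null fun r => measure_iUnion_null fun e => ?_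
    exact K1 θ μs hf j r.val e
  -- patterns that are not rotations of each other differ somewhere
  have hdist : ∀ j j' : ZMod n, ∃ ρ : ZMod n, η (j + ρ) ≠ η' (j' + ρ) := by
    intro j j'
    by_contra hcon
    push_neg at hcon
    refine hnotcyc ⟨j - j', fun i => ?_⟩
    have h := hcon (i - j')
    have h2 : j' + (i - j') = i := by ring
    have h3 : j + (i - j') = i + (j - j') := by ring
    rw [h2, h3] at h
    exact h.symm
  -- the typical set of `η` is null for each tilde measure of `η'`
  have hTnull : ∀ j j' : ZMod n, μt' j' (T η j) = 0 := by
    intro j j'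
    obtain ⟨ρ, hρ⟩ := hdist j j'
    have hWne : ∃ e, Pweight (if η (j + ρ) then vp else vm) e
        ≠ Pweight (if η' (j' + ρ) then vp else vm) e := by
      obtain ⟨e, he⟩ := Function.ne_iff.mp hdiff
      cases hb : η (j + ρ) <;> cases hb' : η' (j' + ρ) <;>
        simp only [hb, hb', if_true, if_false, Bool.false_eq_true, Bool.true_eq_false] <;>
        first
          | exact absurd (hb.trans hb'.symm) hρ
          | exact ⟨e, fun h => he h.symm⟩
          | exact ⟨e, he⟩
    obtain ⟨e, he⟩ := hWne
    have hval : ((ρ.val : ℕ) : ZMod n) = ρ := ZMod.natCast_rightInverse ρ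
    have hsub : T η j ⊆ avgSet (pos ρ.val) e
        (Pweight (if η (j + ρ) then vp else vm) e) := by
      intro ε hε
      rw [hT] at hε
      have h1 := Set.mem_iInter.mp hε ⟨ρ.val, ZMod.val_lt ρ⟩
      have h2 := Set.mem_iInter.mp h1 e
      rwa [hval] at h2
    have hq : μt' j' (avgSet (pos ρ.val) e
        (Pweight (if η' (j' + ρ) then vp else vm) e))ᶜ = 0 := by
      have := K1 η' μt' hfam' j' ρ.val e
      rwa [hval] at this
    have hdisj : avgSet (pos ρ.val) e (Pweight (if η (j + ρ) then vp else vm) e)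
        ⊆ (avgSet (pos ρ.val) e (Pweight (if η' (j' + ρ) then vp else vm) e))ᶜ := by
      intro ε hε hε'
      exact he (tendsto_nhds_unique hε hε')
    exact measure_mono_null (hsub.trans hdisj) hq
  -- conclude
  set S : Set (ℤ → Fin 3) := ⋃ j : ZMod n, T η j with hS
  refine ⟨Sᶜ, (MeasurableSet.iUnion fun j => hTmeas η j).compl, ?_, ?_⟩
  · have h0 : ∀ j, μt j Sᶜ = 0 := fun j =>
      measure_mono_null (Set.compl_subset_compl.mpr (Set.subset_iUnion _ j))
        (hTfull η μt hfam j)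
    rw [muEta, Measure.smul_apply, Measure.finset_sum_apply]
    simp [Measure.smul_apply, h0]
  · rw [compl_compl]
    have h0 : ∀ j', μt' j' S = 0 := fun j' => measure_iUnion_null fun j => hTnull j j'
    rw [muEta, Measure.smul_apply, Measure.finset_sum_apply]
    simp [Measure.smul_apply, h0]
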